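/- (Annular Poincaré inequality with radial derivative) There exists a universal constant C = C(d) > 0 such that for every open cone O ⊆ ℝ^d and every f ∈ C¹(cl(B₄ \ B_{1/4}) ∩ O): ∫_{(B₄ \ B_{1/4}) ∩ O} f² dx ≤ C ( ∫_{(B₄ \ B_{1/4}) ∩ O} (x·∇f(x) − f(x))² dx + ∫_{(B₂ \ B_{1/2}) ∩ O} f² dx ). -/

import Mathlib

open MeasureTheory Metric Set Filter Topology
open Pointwise

section helpers
variable {α : Type*} [MeasurableSpace α] [TopologicalSpace α] [OpensMeasurableSpace α]
  {μ : Measure α} {s t : Set α}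

lemma myIntegrableOn {f : α → ℝ} (hs : MeasurableSet s) (hfin : μ s ≠ ⊤)
    (hf : ContinuousOn f s) {M : ℝ} (hM : ∀ x ∈ s, |f x| ≤ M) : IntegrableOn f s μ :=
  ⟨hf.aestronglyMeasurable hs,
    HasFiniteIntegral.restrict_of_bounded (C := M) hfin.lt_top
      ((ae_restrict_mem hs).mono fun x hx => hM x hx)⟩

lemma mySetIntegral_union_le {f : α → ℝ} (hs : MeasurableSet s) (ht : MeasurableSet t)
    (hf : IntegrableOn f (s ∪ t) μ) (h0 : ∀ x, 0 ≤ f x) :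
    ∫ x in s ∪ t, f x ∂μ ≤ (∫ x in s, f x ∂μ) + ∫ x in t, f x ∂μ := by
  have he : s ∪ t = s ∪ (t \ s) := (union_diff_self).symm
  rw [he, setIntegral_union disjoint_sdiff_self_right (ht.diff hs)
      (hf.mono_set subset_union_left) (hf.mono_set (diff_subset.trans subset_union_right))]
  refine add_le_add_right (setIntegral_mono_set (hf.mono_set subset_union_right)
    (Filter.Eventually.of_forall h0) (HasSubset.Subset.eventuallyLE diff_subset)) _

end helpers

lemma mySqIntegralLe {u : ℝ → ℝ} {a b : ℝ} (hab : a ≤ b) (hu : ContinuousOn u (Icc a b)) :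
    (∫ r in Ioc a b, u r) ^ 2 ≤ (b - a) * ∫ r in Ioc a b, (u r) ^ 2 := by
  set μ := volume.restrict (Ioc a b) with hμ
  haveI : IsFiniteMeasure μ := ⟨by
    rw [hμ, Measure.restrict_apply_univ]; exact measure_Ioc_lt_top⟩
  obtain ⟨M, hMbd⟩ := (isCompact_Icc (a := a) (b := b)).exists_bound_of_continuousOn hu
  have humeas : AEStronglyMeasurable u μ :=
    (hu.mono Ioc_subset_Icc_self).aestronglyMeasurable measurableSet_Ioc
  have h2 : ∀ x : ℝ, x ^ (2:ℝ) = x ^ (2:ℕ) := fun x => by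
    rw [show (2:ℝ) = ((2:ℕ):ℝ) by norm_num, Real.rpow_natCast]
  have hsq : ∀ z : ℝ, 0 ≤ z → (z ^ (1/2:ℝ)) ^ (2:ℕ) = z := fun z hz => by
    rw [← Real.rpow_natCast (z ^ (1/2:ℝ)) 2, ← Real.rpow_mul hz]; norm_num
  have holder := integral_mul_le_Lp_mul_Lq_of_nonneg (μ := μ)
    (p := 2) (q := 2) Real.HolderConjugate.two_two
    (f := fun r => |u r|) (g := fun _ => (1:ℝ))
    (Filter.Eventually.of_forall fun r => abs_nonneg _)
    (Filter.Eventually.of_forall fun _ => zero_le_one)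
    (MemLp.of_bound humeas.norm M ((ae_restrict_mem measurableSet_Ioc).mono
      fun x hx => by simpa using hMbd x (Ioc_subset_Icc_self hx)))
    (memLp_const 1)
  simp only [mul_one, one_pow, Real.one_rpow, integral_const, smul_eq_mul, h2] at holder
  have hμuniv : μ.real univ = b - a := by
    rw [measureReal_def, hμ, Measure.restrict_apply_univ, Real.volume_Ioc, ENNReal.toReal_ofReal (by linarith)]
  rw [hμuniv] at holder
  have hX : (0:ℝ) ≤ ∫ r, (u r)^2 ∂μ := integral_nonneg fun r => sq_nonneg _
  have habs : ∀ r, |u r| ^ (2:ℕ) = (u r) ^ 2 := fun r => sq_abs _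
  simp only [habs] at holder
  have h0 : |∫ r, u r ∂μ| ≤ ∫ r, |u r| ∂μ := by
    simpa [Real.norm_eq_abs] using norm_integral_le_integral_norm (μ := μ) u
  have h1 : (∫ r, u r ∂μ) ^ 2 ≤ (∫ r, |u r| ∂μ) ^ 2 := by
    rw [← sq_abs (∫ r, u r ∂μ)]
    exact pow_le_pow_left₀ (abs_nonneg _) h0 2
  have hI : (0:ℝ) ≤ ∫ r, |u r| ∂μ := integral_nonneg fun r => abs_nonneg _
  have h3 : (∫ r, |u r| ∂μ) ^ (2:ℕ) ≤ ((∫ r, (u r)^2 ∂μ) ^ (1/2:ℝ)) ^(2:ℕ) * ((b-a) ^ (1/2:ℝ))^(2:ℕ) := by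
    rw [← mul_pow]
    exact pow_le_pow_left₀ hI holder 2
  calc (∫ r in Ioc a b, u r) ^ 2 ≤ (∫ r, |u r| ∂μ)^2 := h1
    _ ≤ _ := h3
    _ = (b-a) * ∫ r in Ioc a b, (u r)^2 := by
        rw [hsq _ hX, hsq _ (by linarith : (0:ℝ) ≤ b - a)]; ring

lemma myBddFderiv {E : Type*} [NormedAddCommGroup E] [NormedSpace ℝ E]
    {F : Type*} [NormedAddCommGroup F] [NormedSpace ℝ F]
    {f : E → F} {U : Set E} (hUopen : IsOpen U)
    (hf : ContDiffOn ℝ 1 f (closure U)) (hK : IsCompact (closure U)) :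
    ∃ M : ℝ, ∀ x ∈ U, ‖fderiv ℝ f x‖ ≤ M := by
  have key : ∀ x, x ∈ closure U →
      ∃ w : Set E, IsOpen w ∧ x ∈ w ∧ ∃ M : ℝ, ∀ y ∈ w ∩ U, ‖fderiv ℝ f y‖ ≤ M := by
    intro x hx
    have hx1 : ContDiffWithinAt ℝ 1 f (closure U) x := hf x hx
    rw [show (1 : WithTop ℕ∞) = 0 + 1 from (zero_add 1).symm,
      contDiffWithinAt_succ_iff_hasFDerivWithinAt (by simp)] at hx1
    obtain ⟨u, hu, -, f', hf'deriv, hf'cont⟩ := hx1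
    rw [insert_eq_of_mem hx] at hu
    have hcont : ContinuousWithinAt f' u x := hf'cont.continuousWithinAt
    have hbdd : ∀ᶠ y in 𝓝[u] x, ‖f' y‖ < ‖f' x‖ + 1 :=
      hcont.norm.eventually_lt_const (lt_add_one _)
    have hbdd' : ∀ᶠ y in 𝓝[closure U] x, ‖f' y‖ < ‖f' x‖ + 1 :=
      (nhdsWithin_le_of_mem hu) hbdd
    have hmem : ∀ᶠ y in 𝓝[closure U] x, y ∈ u := hu
    obtain ⟨w, hwopen, hxw, hwsub⟩ := mem_nhdsWithin.1 (hbdd'.and hmem)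
    refine ⟨w, hwopen, hxw, ‖f' x‖ + 1, fun y hy => ?_⟩
    have hyV : ‖f' y‖ < ‖f' x‖ + 1 ∧ y ∈ u := hwsub ⟨hy.1, subset_closure hy.2⟩
    have hwU : w ∩ U ⊆ u := fun z hz => (hwsub ⟨hz.1, subset_closure hz.2⟩).2
    have hder : HasFDerivAt f (f' y) y :=
      ((hf'deriv y hyV.2).mono hwU).hasFDerivAt
        ((hwopen.inter hUopen).mem_nhds hy)
    rw [hder.fderiv]
    exact hyV.1.le
  choose! w hw1 hw2 M hM using key
  obtain ⟨t, ht, hcover⟩ := hK.elim_nhds_subcover w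
    (fun x hx => (hw1 x hx).mem_nhds (hw2 x hx))
  refine ⟨∑ z ∈ t, |M z|, fun y hy => ?_⟩
  obtain ⟨x, hxt, hyx⟩ := mem_iUnion₂.1 (hcover (subset_closure hy))
  exact (hM x (ht x hxt) y ⟨hyx, hy⟩).trans <|
    (le_abs_self _).trans <| Finset.single_le_sum (fun i _ => abs_nonneg (M i)) hxt

lemma myRadialDeriv {E : Type*} [NormedAddCommGroup E] [InnerProductSpace ℝ E]
    {f : E → ℝ} {x : E} {r : ℝ} (hr : r ≠ 0) (hf : DifferentiableAt ℝ f (r • x)) :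
    HasDerivAt (fun t : ℝ => f (t • x) / t)
      ((fderiv ℝ f (r • x) (r • x) - f (r • x)) / r ^ 2) r := by
  have h1 : HasDerivAt (fun t : ℝ => t • x) x r := by
    simpa using (hasDerivAt_id r).smul_const x
  have h2 : HasDerivAt (fun t : ℝ => f (t • x)) (fderiv ℝ f (r • x) x) r :=
    hf.hasFDerivAt.comp_hasDerivAt r h1
  have h3 := h2.div (hasDerivAt_id r) hr
  convert h3 using 1
  · rfl
  · rfl
  · rfl
  rw [show (fderiv ℝ f (r • x)) (r • x) = r * (fderiv ℝ f (r • x)) x by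
    rw [ContinuousLinearMap.map_smul, smul_eq_mul]]
  simp only [id_eq]
  ring

set_option maxHeartbeats 1000000 in
/-- Annular Poincaré inequality with radial derivative on open cones: there is a universal
constant `C = C(d)` such that for every open cone `O` and every `C¹` function `f`,
`∫_{(B₄∖B_{1/4})∩O} f² ≤ C (∫_{(B₄∖B_{1/4})∩O} (x·∇f − f)² + ∫_{(B₂∖B_{1/2})∩O} f²)`. -/
theorem stmt9 (d : ℕ) :
    ∃ C > (0 : ℝ), ∀ (O : Set (EuclideanSpace ℝ (Fin d))), IsOpen O →
      (∀ x ∈ O, ∀ l : ℝ, 0 < l → l • x ∈ O) →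
      ∀ f : EuclideanSpace ℝ (Fin d) → ℝ,
        ContDiffOn ℝ 1 f (closure ((ball (0 : EuclideanSpace ℝ (Fin d)) 4 \
            closedBall 0 (1 / 4)) ∩ O)) →
        (∫ x in (ball (0 : EuclideanSpace ℝ (Fin d)) 4 \ closedBall 0 (1 / 4)) ∩ O,
            (f x) ^ 2)
          ≤ C * ((∫ x in (ball (0 : EuclideanSpace ℝ (Fin d)) 4 \ closedBall 0 (1 / 4)) ∩ O,
                ((inner ℝ x (gradient f x) : ℝ) - f x) ^ 2)
            + ∫ x in (ball (0 : EuclideanSpace ℝ (Fin d)) 2 \ closedBall 0 (1 / 2)) ∩ O,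
                (f x) ^ 2) := by
  classical
  refine ⟨512 * 4 ^ d + 16 * 2 ^ d + 1, by positivity, fun O hOopen hOcone f hf => ?_⟩
  set U : Set (EuclideanSpace ℝ (Fin d)) :=
    (ball (0 : EuclideanSpace ℝ (Fin d)) 4 \ closedBall 0 (1 / 4)) ∩ O with hUdef
  set A : Set (EuclideanSpace ℝ (Fin d)) :=
    (ball (0 : EuclideanSpace ℝ (Fin d)) 2 \ closedBall 0 (1 / 2)) ∩ O with hAdef
  have hUopen : IsOpen U := (isOpen_ball.sdiff Metric.isClosed_closedBall).inter hOopen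
  have hAopen : IsOpen A := (isOpen_ball.sdiff Metric.isClosed_closedBall).inter hOopen
  have hUmeas : MeasurableSet U := hUopen.measurableSet
  have hAmeas : MeasurableSet A := hAopen.measurableSet
  have hUnorm : ∀ x ∈ U, 1/4 < ‖x‖ ∧ ‖x‖ < 4 := by
    rintro x ⟨⟨hb, hnb⟩, -⟩
    rw [mem_ball_zero_iff] at hb
    rw [mem_closedBall_zero_iff] at hnb
    exact ⟨lt_of_not_ge (by simpa using hnb), hb⟩
  have hAnorm : ∀ x ∈ A, 1/2 < ‖x‖ ∧ ‖x‖ < 2 := by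
    rintro x ⟨⟨hb, hnb⟩, -⟩
    rw [mem_ball_zero_iff] at hb
    rw [mem_closedBall_zero_iff] at hnb
    exact ⟨lt_of_not_ge (by simpa using hnb), hb⟩
  have hmemU : ∀ x ∈ O, 1/4 < ‖x‖ → ‖x‖ < 4 → x ∈ U := by
    intro x hO h1 h2
    exact ⟨⟨mem_ball_zero_iff.2 h2, fun hc => absurd (mem_closedBall_zero_iff.1 hc)
      (by linarith)⟩, hO⟩
  have hmemA : ∀ x ∈ O, 1/2 < ‖x‖ → ‖x‖ < 2 → x ∈ A := by
    intro x hO h1 h2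
    exact ⟨⟨mem_ball_zero_iff.2 h2, fun hc => absurd (mem_closedBall_zero_iff.1 hc)
      (by linarith)⟩, hO⟩
  have hAU : A ⊆ U := by
    intro x hx
    obtain ⟨h1, h2⟩ := hAnorm x hx
    exact hmemU x hx.2 (by linarith) (by linarith)
  have hscale : ∀ r : ℝ, 1/2 ≤ r → r ≤ 2 → ∀ y ∈ A, r • y ∈ U := by
    intro r hr1 hr2 y hy
    obtain ⟨h1, h2⟩ := hAnorm y hy
    have hrpos : (0:ℝ) < r := by linarith
    have hnorm : ‖r • y‖ = r * ‖y‖ := by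
      rw [norm_smul, Real.norm_eq_abs, abs_of_pos hrpos]
    refine hmemU _ (hOcone y hy.2 r hrpos) ?_ ?_ <;> rw [hnorm] <;> nlinarith
  have hUfin : volume U ≠ ⊤ :=
    ((measure_mono (fun x hx => mem_ball_zero_iff.2 (hUnorm x hx).2)).trans_lt
      measure_ball_lt_top).ne
  have hAfin : volume A ≠ ⊤ :=
    ((measure_mono hAU).trans_lt hUfin.lt_top).ne
  have hclosK : IsCompact (closure U) :=
    (isCompact_closedBall (0 : EuclideanSpace ℝ (Fin d)) 4).of_isClosed_subset
      isClosed_closure (closure_minimal (fun x hx =>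
        mem_closedBall_zero_iff.2 (hUnorm x hx).2.le) Metric.isClosed_closedBall)
  have hfU : ContDiffOn ℝ 1 f U := hf.mono subset_closure
  have hdiff : ∀ x ∈ U, DifferentiableAt ℝ f x := fun x hx =>
    (hf.contDiffAt (mem_nhds_iff.2 ⟨U, subset_closure, hUopen, hx⟩)).differentiableAt one_ne_zero
  obtain ⟨Mf, hMf⟩ := hclosK.exists_bound_of_continuousOn hf.continuousOn
  obtain ⟨Md, hMd⟩ := myBddFderiv hUopen hf hclosK
  set H : EuclideanSpace ℝ (Fin d) → ℝ := fun x => fderiv ℝ f x x - f x with hHdef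
  have hHcont : ContinuousOn H U :=
    ((hfU.continuousOn_fderiv_of_isOpen hUopen le_rfl).clm_apply continuousOn_id).sub
      (hf.continuousOn.mono subset_closure)
  set MH : ℝ := 4 * Md + Mf with hMHdef
  have hHbd : ∀ x ∈ U, |H x| ≤ MH := by
    intro x hx
    have h1 : |fderiv ℝ f x x| ≤ Md * 4 := by
      calc |fderiv ℝ f x x| ≤ ‖fderiv ℝ f x‖ * ‖x‖ := (fderiv ℝ f x).le_opNorm x
        _ ≤ Md * 4 := mul_le_mul (hMd x hx) (hUnorm x hx).2.le (norm_nonneg _)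
            ((norm_nonneg _).trans (hMd x hx))
    have h2 : |f x| ≤ Mf := by simpa using hMf x (subset_closure hx)
    calc |H x| ≤ |fderiv ℝ f x x| + |f x| := abs_sub _ _
      _ ≤ MH := by rw [hMHdef]; linarith
  have hMH0 : ∀ x ∈ U, (0:ℝ) ≤ MH := fun x hx => (abs_nonneg _).trans (hHbd x hx)
  have Ihsq : IntegrableOn (fun x => H x ^ 2) U := by
    refine myIntegrableOn hUmeas hUfin (hHcont.pow 2) (M := MH ^ 2) fun x hx => ?_
    rw [abs_pow]
    exact pow_le_pow_left₀ (abs_nonneg _) (hHbd x hx) 2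
  have Ifsq : IntegrableOn (fun x => f x ^ 2) U := by
    refine myIntegrableOn hUmeas hUfin
      ((hf.continuousOn.mono subset_closure).pow 2) (M := Mf ^ 2) fun x hx => ?_
    rw [abs_pow]
    exact pow_le_pow_left₀ (abs_nonneg _)
      (by simpa using hMf x (subset_closure hx)) 2
  set IU : ℝ := ∫ x in U, H x ^ 2 with hIUdef
  set Y : ℝ := ∫ x in A, f x ^ 2 with hYdef
  have hIU0 : 0 ≤ IU := integral_nonneg fun x => sq_nonneg _
  have hY0 : 0 ≤ Y := integral_nonneg fun x => sq_nonneg _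
  -- continuity of the radial integrand
  have hcontIcc : ∀ y ∈ A, ∀ a b : ℝ, 1/2 ≤ a → a ≤ b → b ≤ 2 →
      ContinuousOn (fun r : ℝ => H (r • y) / r ^ 2) (Icc a b) := by
    intro y hy a b ha hab hb2
    have hmem : ∀ r ∈ Icc a b, r • y ∈ U := fun r hr =>
      hscale r (ha.trans hr.1) (hr.2.trans hb2) y hy
    refine ContinuousOn.div
      (hHcont.comp ((continuous_id.smul continuous_const).continuousOn) hmem)
      ((continuous_pow 2).continuousOn) fun r hr => ?_
    have hrpos : (0:ℝ) < r := by have := hr.1; linarith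
    positivity
  -- FTC along rays
  have ftc : ∀ y ∈ A, ∀ a b : ℝ, 1/2 ≤ a → a ≤ b → b ≤ 2 →
      ∫ r in Ioc a b, H (r • y) / r ^ 2 = f (b • y) / b - f (a • y) / a := by
    intro y hy a b ha hab hb2
    have hmem : ∀ r ∈ Icc a b, r • y ∈ U := fun r hr =>
      hscale r (ha.trans hr.1) (hr.2.trans hb2) y hy
    have hIcc : uIcc a b = Icc a b := uIcc_of_le hab
    have hderiv : ∀ r ∈ uIcc a b, HasDerivAt (fun t : ℝ => f (t • y) / t)
        (H (r • y) / r ^ 2) r := by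
      intro r hr
      rw [hIcc] at hr
      have hrpos : (0:ℝ) < r := by have := hr.1; linarith
      have := myRadialDeriv (x := y) hrpos.ne' (hdiff _ (hmem r hr))
      simpa [hHdef] using this
    have hftc := intervalIntegral.integral_eq_sub_of_hasDerivAt hderiv
      ((hIcc ▸ (hcontIcc y hy a b ha hab hb2)).intervalIntegrable)
    rwa [intervalIntegral.integral_of_le hab] at hftc
  -- Fubini estimate
  have EST : ∀ a b : ℝ, 1/2 ≤ a → a ≤ b → b ≤ 2 →
      IntegrableOn (fun y => ∫ r in Ioc a b, H (r • y) ^ 2 / r ^ 4) A ∧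
      (∫ y in A, ∫ r in Ioc a b, H (r • y) ^ 2 / r ^ 4) ≤ (b - a) * (16 * 2 ^ d * IU) := by
    intro a b ha hab hb2
    have hsmul_mem : ∀ p : EuclideanSpace ℝ (Fin d) × ℝ, p ∈ A ×ˢ Ioc a b → p.2 • p.1 ∈ U :=
      fun p hp => hscale p.2 (ha.trans hp.2.1.le) (hp.2.2.trans hb2) p.1 hp.1
    have hΦcont : ContinuousOn (fun p : EuclideanSpace ℝ (Fin d) × ℝ =>
        H (p.2 • p.1) ^ 2 / p.2 ^ 4) (A ×ˢ Ioc a b) := by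
      refine ContinuousOn.div
        ((hHcont.comp (continuous_snd.smul continuous_fst).continuousOn hsmul_mem).pow 2)
        ((continuous_snd.pow 4).continuousOn) fun p hp => ?_
      have hp2 : (0:ℝ) < p.2 := by have := hp.2.1; linarith
      positivity
    have hprodmeas : MeasurableSet (A ×ˢ Ioc a b) := hAmeas.prod measurableSet_Ioc
    have hprodfin : (volume.prod volume) (A ×ˢ Ioc a b) ≠ ⊤ := by
      rw [Measure.prod_prod]
      exact ENNReal.mul_ne_top hAfin measure_Ioc_lt_top.ne
    have hΦbd : ∀ p ∈ A ×ˢ Ioc a b, |H (p.2 • p.1) ^ 2 / p.2 ^ 4| ≤ MH ^ 2 * 16 := by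
      intro p hp
      have hU' := hsmul_mem p hp
      have h2 : (1/2:ℝ) ≤ p.2 := ha.trans hp.2.1.le
      have hHsq : H (p.2 • p.1) ^ 2 ≤ MH ^ 2 := by
        rw [← sq_abs]
        exact pow_le_pow_left₀ (abs_nonneg _) (hHbd _ hU') 2
      have hp4 : (1/16:ℝ) ≤ p.2 ^ 4 := by
        have := pow_le_pow_left₀ (by norm_num : (0:ℝ) ≤ 1/2) h2 4
        norm_num at this ⊢
        linarith
      rw [abs_of_nonneg (by positivity)]
      rw [div_le_iff₀ (by positivity)]
      nlinarith [mul_nonneg (sq_nonneg MH) (by linarith : (0:ℝ) ≤ 16 * p.2 ^ 4 - 1)]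
    have hInt : IntegrableOn (fun p : EuclideanSpace ℝ (Fin d) × ℝ =>
        H (p.2 • p.1) ^ 2 / p.2 ^ 4) (A ×ˢ Ioc a b) (volume.prod volume) :=
      myIntegrableOn hprodmeas hprodfin hΦcont hΦbd
    have hIntProd : Integrable (Function.uncurry fun (y : EuclideanSpace ℝ (Fin d)) (r : ℝ) =>
        H (r • y) ^ 2 / r ^ 4) ((volume.restrict A).prod (volume.restrict (Ioc a b))) := by
      rw [Measure.prod_restrict]
      exact hInt
    refine ⟨hIntProd.integral_prod_left, ?_⟩
    have hswap := integral_integral_swap hIntProd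
    rw [show (∫ y in A, ∫ r in Ioc a b, H (r • y) ^ 2 / r ^ 4) =
      ∫ r in Ioc a b, ∫ y in A, H (r • y) ^ 2 / r ^ 4 from hswap]
    have hinner : ∀ r ∈ Ioc a b, (∫ y in A, H (r • y) ^ 2 / r ^ 4) ≤ 16 * 2 ^ d * IU := by
      intro r hr
      have hr2 : (1/2:ℝ) ≤ r := ha.trans hr.1.le
      have hrpos : (0:ℝ) < r := by linarith
      rw [integral_div]
      have hcv := Measure.setIntegral_comp_smul_of_pos volume
        (fun x => H x ^ 2) A hrpos
      rw [finrank_euclideanSpace_fin] at hcv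
      rw [hcv]
      have hsub : r • A ⊆ U := by
        rintro z ⟨y, hy, rfl⟩
        exact hscale r hr2 (hr.2.trans hb2) y hy
      have hmono : (∫ x in r • A, H x ^ 2) ≤ IU :=
        setIntegral_mono_set Ihsq (Eventually.of_forall fun x => sq_nonneg _)
          (HasSubset.Subset.eventuallyLE hsub)
      have hIr0 : (0:ℝ) ≤ ∫ x in r • A, H x ^ 2 := integral_nonneg fun x => sq_nonneg _
      have hα : (r ^ d)⁻¹ ≤ 2 ^ d := by
        rw [← one_div, div_le_iff₀ (by positivity)]
        calc (1:ℝ) = (2 * (1/2)) ^ d := by norm_num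
          _ ≤ (2 * r) ^ d := pow_le_pow_left₀ (by norm_num) (by linarith) d
          _ = 2 ^ d * r ^ d := mul_pow 2 r d
      have hβ : (r ^ 4)⁻¹ ≤ 16 := by
        rw [← one_div, div_le_iff₀ (by positivity)]
        have := pow_le_pow_left₀ (by norm_num : (0:ℝ) ≤ 1/2) hr2 4
        norm_num at this
        linarith
      have hβ0 : (0:ℝ) ≤ (r ^ 4)⁻¹ := by positivity
      calc (r ^ d)⁻¹ • (∫ x in r • A, H x ^ 2) / r ^ 4
          = ((r ^ d)⁻¹ * (∫ x in r • A, H x ^ 2)) * (r ^ 4)⁻¹ := by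
            rw [smul_eq_mul, div_eq_mul_inv]
        _ ≤ (2 ^ d * IU) * 16 :=
            mul_le_mul (mul_le_mul hα hmono hIr0 (by positivity)) hβ hβ0 (by positivity)
        _ = 16 * 2 ^ d * IU := by ring
    have houter : IntegrableOn (fun r => ∫ y in A, H (r • y) ^ 2 / r ^ 4) (Ioc a b) :=
      hIntProd.integral_prod_right
    calc ∫ r in Ioc a b, ∫ y in A, H (r • y) ^ 2 / r ^ 4
        ≤ ∫ _ in Ioc a b, 16 * 2 ^ d * IU :=
          setIntegral_mono_on houter (integrableOn_const measure_Ioc_lt_top.ne)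
            measurableSet_Ioc hinner
      _ = (b - a) * (16 * 2 ^ d * IU) := by
          rw [setIntegral_const, measureReal_def, Real.volume_Ioc, smul_eq_mul,
            ENNReal.toReal_ofReal (by linarith)]
  -- one scaling step
  have STEP : ∀ a b c : ℝ, 1/2 ≤ a → a ≤ b → b ≤ 2 → b - a ≤ 1 → 0 < c →
      (c = a ∧ b = 1) ∨ (c = b ∧ a = 1) →
      ∫ x in c • A, f x ^ 2 ≤ 8 * 2 ^ d * Y + 128 * 4 ^ d * IU := by
    intro a b c ha hab hb2 hba hc hcase
    have hc2 : c ≤ 2 := by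
      rcases hcase with ⟨rfl, -⟩ | ⟨rfl, -⟩ <;> linarith
    have hc12 : 1/2 ≤ c := by
      rcases hcase with ⟨rfl, -⟩ | ⟨rfl, ha1⟩
      · exact ha
      · linarith
    obtain ⟨hItail, hEbound⟩ := EST a b ha hab hb2
    have ptw : ∀ y ∈ A, f (c • y) ^ 2 ≤ 8 * f y ^ 2 +
        8 * ∫ r in Ioc a b, H (r • y) ^ 2 / r ^ 4 := by
      intro y hy
      have hftc := ftc y hy a b ha hab hb2
      set J : ℝ := ∫ r in Ioc a b, H (r • y) / r ^ 2 with hJdef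
      have hJsq : J ^ 2 ≤ ∫ r in Ioc a b, H (r • y) ^ 2 / r ^ 4 := by
        have hCS := mySqIntegralLe hab (hcontIcc y hy a b ha hab hb2)
        have heq : ∀ r : ℝ, (H (r • y) / r ^ 2) ^ 2 = H (r • y) ^ 2 / r ^ 4 := fun r => by
          rw [div_pow, ← pow_mul]
        simp only [heq] at hCS
        rw [← hJdef] at hCS
        have h0 : (0:ℝ) ≤ ∫ r in Ioc a b, H (r • y) ^ 2 / r ^ 4 :=
          integral_nonneg fun r => by positivity
        nlinarith
      have hcsq : c ^ 2 ≤ 4 := by nlinarith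
      have hkey : f (c • y) ^ 2 ≤ 8 * f y ^ 2 + 8 * J ^ 2 := by
        rcases hcase with ⟨rfl, hb1⟩ | ⟨rfl, ha1⟩
        · subst hb1
          rw [one_smul, div_one] at hftc
          have h1 : f (c • y) / c = f y - J := by linarith
          have hfc : f (c • y) = c * (f y - J) := by
            rw [← h1]; field_simp
          rw [hfc]
          nlinarith [sq_nonneg (f y + J), sq_nonneg (f y - J),
            mul_nonneg (by nlinarith : (0:ℝ) ≤ 4 - c ^ 2) (sq_nonneg (f y - J))]
        · subst ha1
          rw [one_smul, div_one] at hftc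
          have h1 : f (c • y) / c = f y + J := by linarith
          have hfc : f (c • y) = c * (f y + J) := by
            rw [← h1]; field_simp
          rw [hfc]
          nlinarith [sq_nonneg (f y + J), sq_nonneg (f y - J),
            mul_nonneg (by nlinarith : (0:ℝ) ≤ 4 - c ^ 2) (sq_nonneg (f y + J))]
      linarith
    have hmapsA : ∀ y ∈ A, c • y ∈ U := fun y hy => hscale c hc12 hc2 y hy
    have hILHS : IntegrableOn (fun y => f (c • y) ^ 2) A := by
      refine myIntegrableOn hAmeas hAfin ?_ (M := Mf ^ 2) fun y hy => ?_
      · exact (((hf.continuousOn.mono subset_closure).comp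
          (continuous_const_smul c).continuousOn hmapsA).pow 2)
      · rw [abs_pow]
        exact pow_le_pow_left₀ (abs_nonneg _)
          (by simpa using hMf _ (subset_closure (hmapsA y hy))) 2
    have hIRHS : IntegrableOn
        (fun y => 8 * f y ^ 2 + 8 * ∫ r in Ioc a b, H (r • y) ^ 2 / r ^ 4) A :=
      ((Ifsq.mono_set hAU).const_mul 8).add (hItail.const_mul 8)
    have hintA0 : (0:ℝ) ≤ ∫ y in A, f (c • y) ^ 2 := integral_nonneg fun y => sq_nonneg _
    have hIA : ∫ y in A, f (c • y) ^ 2 ≤ 8 * Y + 128 * 2 ^ d * IU := by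
      calc ∫ y in A, f (c • y) ^ 2
          ≤ ∫ y in A, (8 * f y ^ 2 + 8 * ∫ r in Ioc a b, H (r • y) ^ 2 / r ^ 4) :=
            setIntegral_mono_on hILHS hIRHS hAmeas ptw
        _ = 8 * Y + 8 * ∫ y in A, ∫ r in Ioc a b, H (r • y) ^ 2 / r ^ 4 := by
            rw [integral_add ((Ifsq.mono_set hAU).const_mul 8) (hItail.const_mul 8),
              integral_const_mul, integral_const_mul]
        _ ≤ 8 * Y + 128 * 2 ^ d * IU := by
            have : (b - a) * (16 * 2 ^ d * IU) ≤ 16 * 2 ^ d * IU :=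
              mul_le_of_le_one_left (by positivity) hba
            nlinarith [hEbound]
    have hcv := Measure.setIntegral_comp_smul_of_pos volume (fun x => f x ^ 2) A hc
    rw [finrank_euclideanSpace_fin] at hcv
    have hrw : ∫ x in c • A, f x ^ 2 = c ^ d * ∫ y in A, f (c • y) ^ 2 := by
      rw [hcv, smul_eq_mul, ← mul_assoc, mul_inv_cancel₀ (by positivity), one_mul]
    rw [hrw]
    have hcd : c ^ d ≤ 2 ^ d := pow_le_pow_left₀ hc.le hc2 d
    calc c ^ d * ∫ y in A, f (c • y) ^ 2
        ≤ 2 ^ d * (8 * Y + 128 * 2 ^ d * IU) :=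
          mul_le_mul hcd hIA hintA0 (by positivity)
      _ = 8 * 2 ^ d * Y + 128 * 4 ^ d * IU := by
          have h4d : (2:ℝ) ^ d * 2 ^ d = 4 ^ d := by
            rw [← mul_pow]; norm_num
          nlinarith [h4d]
  -- combine
  have S2 : ∫ x in (2:ℝ) • A, f x ^ 2 ≤ 8 * 2 ^ d * Y + 128 * 4 ^ d * IU :=
    STEP 1 2 2 (by norm_num) (by norm_num) le_rfl (by norm_num) (by norm_num)
      (Or.inr ⟨rfl, rfl⟩)
  have Sh : ∫ x in (2⁻¹:ℝ) • A, f x ^ 2 ≤ 8 * 2 ^ d * Y + 128 * 4 ^ d * IU :=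
    STEP 2⁻¹ 1 2⁻¹ (by norm_num) (by norm_num) (by norm_num) (by norm_num) (by norm_num)
      (Or.inl ⟨rfl, rfl⟩)
  have hUnionSubU : A ∪ ((2:ℝ) • A ∪ (2⁻¹:ℝ) • A) ⊆ U := by
    rintro x (hx | hx | hx)
    · exact hAU hx
    · obtain ⟨y, hy, rfl⟩ := hx
      exact hscale 2 (by norm_num) le_rfl y hy
    · obtain ⟨y, hy, rfl⟩ := hx
      exact hscale 2⁻¹ (by norm_num) (by norm_num) y hy
  have hUsubUnion : U ⊆ A ∪ ((2:ℝ) • A ∪ (2⁻¹:ℝ) • A) := by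
    intro x hx
    obtain ⟨h14, h4⟩ := hUnorm x hx
    have hOx := hx.2
    rcases lt_or_ge ‖x‖ 2 with h2 | h2
    · rcases le_or_gt ‖x‖ (1/2) with hhalf | hhalf
      · refine Or.inr (Or.inr ⟨(2:ℝ) • x, ?_, ?_⟩)
        · refine hmemA _ (hOcone x hOx 2 (by norm_num)) ?_ ?_ <;>
            rw [norm_smul, Real.norm_eq_abs, abs_of_pos (by norm_num : (0:ℝ) < 2)] <;>
            linarith
        · show _ • _ • x = x
          rw [smul_smul]; norm_num
      · exact Or.inl (hmemA x hOx hhalf h2)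
    · refine Or.inr (Or.inl ⟨(2⁻¹:ℝ) • x, ?_, ?_⟩)
      · refine hmemA _ (hOcone x hOx 2⁻¹ (by norm_num)) ?_ ?_ <;>
          rw [norm_smul, Real.norm_eq_abs, abs_of_pos (by norm_num : (0:ℝ) < (2:ℝ)⁻¹)] <;>
          linarith
      · show _ • _ • x = x
        rw [smul_smul]; norm_num
  have h2Ameas : MeasurableSet ((2:ℝ) • A) := (hAopen.smul₀ (two_ne_zero (α := ℝ))).measurableSet
  have hhAmeas : MeasurableSet ((2⁻¹:ℝ) • A) :=
    (hAopen.smul₀ (by norm_num : (2⁻¹:ℝ) ≠ 0)).measurableSet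
  have hunion : ∫ x in U, f x ^ 2 ≤ Y + ((8 * 2 ^ d * Y + 128 * 4 ^ d * IU) +
      (8 * 2 ^ d * Y + 128 * 4 ^ d * IU)) := by
    have hIunion : IntegrableOn (fun x => f x ^ 2) (A ∪ ((2:ℝ) • A ∪ (2⁻¹:ℝ) • A)) :=
      Ifsq.mono_set hUnionSubU
    calc ∫ x in U, f x ^ 2
        ≤ ∫ x in A ∪ ((2:ℝ) • A ∪ (2⁻¹:ℝ) • A), f x ^ 2 :=
          setIntegral_mono_set hIunion (Eventually.of_forall fun x => sq_nonneg _)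
            (HasSubset.Subset.eventuallyLE hUsubUnion)
      _ ≤ Y + ∫ x in (2:ℝ) • A ∪ (2⁻¹:ℝ) • A, f x ^ 2 :=
          mySetIntegral_union_le hAmeas (h2Ameas.union hhAmeas) hIunion fun x => sq_nonneg _
      _ ≤ Y + ((8 * 2 ^ d * Y + 128 * 4 ^ d * IU) + (8 * 2 ^ d * Y + 128 * 4 ^ d * IU)) := by
          refine add_le_add_right ?_ Y
          calc ∫ x in (2:ℝ) • A ∪ (2⁻¹:ℝ) • A, f x ^ 2
              ≤ (∫ x in (2:ℝ) • A, f x ^ 2) + ∫ x in (2⁻¹:ℝ) • A, f x ^ 2 :=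
                mySetIntegral_union_le h2Ameas hhAmeas
                  (hIunion.mono_set subset_union_right) fun x => sq_nonneg _
            _ ≤ _ := add_le_add S2 Sh
  -- identify the gradient integrand with H
  have hcongr : (∫ x in U, ((inner ℝ x (gradient f x) : ℝ) - f x) ^ 2) = IU := by
    refine setIntegral_congr_fun hUmeas fun x _ => ?_
    have : (inner ℝ x (gradient f x) : ℝ) = fderiv ℝ f x x := by
      rw [real_inner_comm]
      exact InnerProductSpace.toDual_symm_apply
    rw [this]
  rw [hcongr]
  have hpow : (1:ℝ) ≤ 2 ^ d := one_le_pow₀ one_le_two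
  have hpow4 : (2:ℝ) ^ d ≤ 4 ^ d := pow_le_pow_left₀ (by norm_num) (by norm_num) d
  nlinarith [hunion, hIU0, hY0, mul_nonneg hIU0 hY0]
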